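/- If f is a minterm-transitive Boolean function on n variables, then s⁰(f)·s¹(f) = Ω(√n); concretely, if f = p^G with pattern support size k ≥ 1, then s⁰(f)·s¹(f) ≥ max(c·n/k, k/2) ≥ c'·√n for absolute constants c, c' > 0. -/

import Mathlib

/-- Flip the `i`-th bit of `x`. -/
def flipBit {n : ℕ} (x : Fin n → Bool) (i : Fin n) : Fin n → Bool :=
  fun j => if j = i then !x j else x j

/-- Flip all bits of `x` in the block `B`. -/
def flipSet {n : ℕ} (x : Fin n → Bool) (B : Finset (Fin n)) : Fin n → Bool :=
  fun j => if j ∈ B then !x j else x j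

/-- Sensitivity of `f` at the input `x`. -/
def sensAt {n : ℕ} (f : (Fin n → Bool) → Bool) (x : Fin n → Bool) : ℕ :=
  (Finset.univ.filter fun i => f (flipBit x i) ≠ f x).card

/-- Sensitivity of `f`. -/
def sens {n : ℕ} (f : (Fin n → Bool) → Bool) : ℕ :=
  Finset.univ.sup fun x => sensAt f x

/-- 0-sensitivity of `f`: max sensitivity over inputs where `f` is 0. -/
def sens0 {n : ℕ} (f : (Fin n → Bool) → Bool) : ℕ :=
  (Finset.univ.filter fun x => f x = false).sup fun x => sensAt f x

/-- 1-sensitivity of `f`: max sensitivity over inputs where `f` is 1. -/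
def sens1 {n : ℕ} (f : (Fin n → Bool) → Bool) : ℕ :=
  (Finset.univ.filter fun x => f x = true).sup fun x => sensAt f x

/-- Block sensitivity of `f` at `x`: the largest number of pairwise disjoint
nonempty blocks each of whose flips changes the value of `f` at `x`. -/
noncomputable def bsensAt {n : ℕ} (f : (Fin n → Bool) → Bool) (x : Fin n → Bool) : ℕ :=
  sSup {r : ℕ | ∃ B : Fin r → Finset (Fin n),
    (∀ j, (B j).Nonempty ∧ f (flipSet x (B j)) ≠ f x) ∧
    ∀ j j', j ≠ j' → Disjoint (B j) (B j')}

/-- Block sensitivity of `f`. -/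
noncomputable def bsens {n : ℕ} (f : (Fin n → Bool) → Bool) : ℕ :=
  Finset.univ.sup fun x => bsensAt f x

/-- A permutation group on `[n]` is transitive. -/
def IsTransitive {n : ℕ} (G : Subgroup (Equiv.Perm (Fin n))) : Prop :=
  ∀ i j : Fin n, ∃ π ∈ G, π i = j

open Classical in
/-- The minterm-transitive function `p^G` defined by the partial assignment
`p` with support `S`: it is 1 on `x` iff `x` extends some `G`-shift of `p`. -/
noncomputable def mintermFn {n : ℕ} (G : Subgroup (Equiv.Perm (Fin n)))
    (S : Finset (Fin n)) (p : Fin n → Bool) : (Fin n → Bool) → Bool :=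
  fun x => decide (∃ π ∈ G, ∀ i ∈ S, x (π i) = p i)

section MintermAux
open Finset

lemma mintermFn_eq_true_iff {n : ℕ} (G : Subgroup (Equiv.Perm (Fin n))) (S : Finset (Fin n))
    (p : Fin n → Bool) (x : Fin n → Bool) :
    mintermFn G S p x = true ↔ ∃ π ∈ G, ∀ i ∈ S, x (π i) = p i := by
  simp [mintermFn]

lemma count_le_of_true {n : ℕ} (G : Subgroup (Equiv.Perm (Fin n))) (S : Finset (Fin n))
    (p : Fin n → Bool) (b : Bool) (x : Fin n → Bool) (h : mintermFn G S p x = true) :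
    (S.filter fun i => p i = b).card ≤ (Finset.univ.filter fun j => x j = b).card := by
  rw [mintermFn_eq_true_iff] at h
  obtain ⟨π, hπ, hm⟩ := h
  apply Finset.card_le_card_of_injOn (fun i => π i)
  · intro i hi
    simp only [Finset.mem_coe, mem_filter] at hi ⊢
    exact ⟨mem_univ _, by rw [hm i hi.1]; exact hi.2⟩
  · exact fun a _ b _ hab => π.injective hab

lemma le_sens0 {n : ℕ} (f : (Fin n → Bool) → Bool) (z : Fin n → Bool) (hz : f z = false)
    (V : Finset (Fin n)) (hV : ∀ v ∈ V, f (flipBit z v) = true) : V.card ≤ sens0 f := by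
  have h1 : V.card ≤ sensAt f z := by
    apply Finset.card_le_card
    intro v hv
    simp only [sensAt, mem_filter, mem_univ, true_and]
    rw [hz, hV v hv]; simp
  exact h1.trans (Finset.le_sup (f := fun x => sensAt f x)
    (mem_filter.2 ⟨mem_univ z, hz⟩))

lemma le_sens1 {n : ℕ} (f : (Fin n → Bool) → Bool) (z : Fin n → Bool) (hz : f z = true)
    (V : Finset (Fin n)) (hV : ∀ v ∈ V, f (flipBit z v) = false) : V.card ≤ sens1 f := by
  have h1 : V.card ≤ sensAt f z := by
    apply Finset.card_le_card
    intro v hv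
    simp only [sensAt, mem_filter, mem_univ, true_and]
    rw [hz, hV v hv]; simp
  exact h1.trans (Finset.le_sup (f := fun x => sensAt f x)
    (mem_filter.2 ⟨mem_univ z, hz⟩))

lemma sens1_bound_aux {n : ℕ} (G : Subgroup (Equiv.Perm (Fin n))) (S : Finset (Fin n))
    (p : Fin n → Bool) (b : Bool) :
    (S.filter fun i => p i = b).card ≤ sens1 (mintermFn G S p) := by
  classical
  set x1 : Fin n → Bool := fun j => if j ∈ S then p j else !b with hx1def
  have hx1 : mintermFn G S p x1 = true := by
    rw [mintermFn_eq_true_iff]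
    exact ⟨1, G.one_mem, fun i hi => by simp [x1, hi]⟩
  have hcount : (Finset.univ.filter fun j => x1 j = b) = S.filter fun i => p i = b := by
    ext j
    by_cases hj : j ∈ S <;> simp [x1, hj]
  apply le_sens1 (mintermFn G S p) x1 hx1
  intro v hv
  simp only [mem_filter] at hv
  cases h : mintermFn G S p (flipBit x1 v) with
  | false => rfl
  | true =>
    exfalso
    have hle := count_le_of_true G S p b _ h
    have hset : (Finset.univ.filter fun j => flipBit x1 v j = b)
        = (S.filter fun i => p i = b).erase v := by
      ext j
      rcases eq_or_ne j v with rfl | hne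
      · simp only [mem_filter, mem_univ, true_and, mem_erase, ne_eq, not_true_eq_false,
          false_and, iff_false, flipBit, if_pos rfl]
        simp [x1, hv.1, hv.2]
      · simp only [flipBit, if_neg hne, mem_filter, mem_univ, true_and, mem_erase, hne,
          ne_eq, not_false_eq_true]
        by_cases hj : j ∈ S <;> simp [x1, hj, hne]
    rw [hset, Finset.card_erase_of_mem (by simp [hv.1, hv.2])] at hle
    have hpos : 0 < (S.filter fun i => p i = b).card :=
      Finset.card_pos.mpr ⟨v, by simp [hv.1, hv.2]⟩
    omega

lemma sens1_bound {n : ℕ} (G : Subgroup (Equiv.Perm (Fin n))) (S : Finset (Fin n))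
    (p : Fin n → Bool) : S.card ≤ 2 * sens1 (mintermFn G S p) := by
  classical
  have h1 := sens1_bound_aux G S p true
  have h2 := sens1_bound_aux G S p false
  have hsum : (S.filter fun i => p i = true).card + (S.filter fun i => p i = false).card
      = S.card := by
    conv_rhs => rw [← Finset.card_filter_add_card_filter_not (p := fun i => p i = true)]
    congr 2
    apply Finset.filter_congr
    intro i _
    simp [Bool.not_eq_true]
  omega

lemma path_lemma {n : ℕ} (f : (Fin n → Bool) → Bool) :
    ∀ (N : ℕ) (z w : Fin n → Bool),
      (Finset.univ.filter fun j => z j ≠ w j).card ≤ N →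
      f z = false → f w = true →
      ∃ z' v, f z' = false ∧ f (flipBit z' v) = true ∧
        (∀ j, z j = w j → z' j = z j) ∧ z v ≠ w v := by
  intro N
  induction N with
  | zero =>
    intro z w hcard hz hw
    exfalso
    have hzw : z = w := by
      funext j
      by_contra hj
      have hmem : j ∈ Finset.univ.filter fun j => z j ≠ w j := by simp [hj]
      have := Finset.card_pos.mpr ⟨j, hmem⟩
      omega
    rw [hzw, hw] at hz; exact absurd hz (by simp)
  | succ N ih =>
    intro z w hcard hz hw
    by_cases hzw : ∀ j, z j = w j
    · exfalso; rw [funext hzw, hw] at hz; exact absurd hz (by simp)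
    push_neg at hzw
    obtain ⟨v, hv⟩ := hzw
    by_cases h1 : f (flipBit z v) = true
    · exact ⟨z, v, hz, h1, fun j _ => rfl, hv⟩
    · have h1' : f (flipBit z v) = false := by
        cases h : f (flipBit z v)
        · rfl
        · exact absurd h h1
      have hflipv : flipBit z v v = w v := by
        simp only [flipBit, if_pos rfl]
        revert hv; cases z v <;> cases w v <;> simp
      have hsub : (Finset.univ.filter fun j => flipBit z v j ≠ w j) ⊆
          (Finset.univ.filter fun j => z j ≠ w j).erase v := by
        intro j hj
        simp only [Finset.mem_filter, Finset.mem_univ, true_and] at hj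
        rcases eq_or_ne j v with rfl | hne
        · exact absurd hflipv hj
        · refine Finset.mem_erase.mpr ⟨hne, ?_⟩
          simp only [Finset.mem_filter, Finset.mem_univ, true_and]
          simpa [flipBit, hne] using hj
      have hcard' : (Finset.univ.filter fun j => flipBit z v j ≠ w j).card ≤ N := by
        have h2 := Finset.card_le_card hsub
        have h3 : v ∈ Finset.univ.filter fun j => z j ≠ w j := by simp [hv]
        have h4 := Finset.card_erase_of_mem h3
        have h5 := Finset.card_pos.mpr ⟨v, h3⟩
        omega
      obtain ⟨z', v', hz', hflip, hagree, hv'⟩ := ih (flipBit z v) w hcard' h1' hw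
      refine ⟨z', v', hz', hflip, ?_, ?_⟩
      · intro j hj
        have hjv : j ≠ v := fun h => by rw [h] at hj; exact hv hj
        have heq : flipBit z v j = z j := by simp [flipBit, hjv]
        rw [← heq]
        exact hagree j (heq.trans hj)
      · have hvv : v' ≠ v := by
          intro h; rw [h, hflipv] at hv'; exact hv' rfl
        have heq : flipBit z v v' = z v' := by simp [flipBit, hvv]
        rwa [heq] at hv'

lemma exists_free_translate {n : ℕ} (G : Subgroup (Equiv.Perm (Fin n))) (hG : IsTransitive G)
    (S : Finset (Fin n)) (hS : S.Nonempty) (U : Finset (Fin n))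
    (hU : U.card * S.card < n) :
    ∃ π ∈ G, ∀ i ∈ S, π i ∉ U := by
  classical
  haveI : Fintype ↥G := Fintype.ofFinite ↥G
  by_contra hcon
  push_neg at hcon
  obtain ⟨i₀, hi₀⟩ := hS
  set g : Fin n → Fin n → ℕ :=
    fun i u => (Finset.univ.filter fun π : ↥G => (π : Equiv.Perm (Fin n)) i = u).card with hg
  -- fibers over target are equal
  have hfib1 : ∀ (i u u' : Fin n), g i u = g i u' := by
    intro i u u'
    obtain ⟨σ, hσG, hσ⟩ := hG u u'
    apply Finset.card_bij' (fun π _ => (⟨σ, hσG⟩ : ↥G) * π) (fun π _ => (⟨σ, hσG⟩ : ↥G)⁻¹ * π)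
    · intro π hπ
      simp only [mem_filter, mem_univ, true_and] at hπ ⊢
      simp [Equiv.Perm.mul_apply, hπ, hσ]
    · intro π hπ
      simp only [mem_filter, mem_univ, true_and] at hπ ⊢
      have : (σ : Equiv.Perm (Fin n))⁻¹ u' = u := by
        rw [← hσ]; simp
      simp [Equiv.Perm.mul_apply, hπ, this]
    · intro π _; group
    · intro π _; group
  -- fibers over source are equal
  have hfib2 : ∀ (i i' u : Fin n), g i u = g i' u := by
    intro i i' u
    obtain ⟨σ, hσG, hσ⟩ := hG i' i
    apply Finset.card_bij' (fun π _ => π * (⟨σ, hσG⟩ : ↥G)) (fun π _ => π * (⟨σ, hσG⟩ : ↥G)⁻¹)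
    · intro π hπ
      simp only [mem_filter, mem_univ, true_and] at hπ ⊢
      simp [Equiv.Perm.mul_apply, hσ, hπ]
    · intro π hπ
      simp only [mem_filter, mem_univ, true_and] at hπ ⊢
      have : (σ : Equiv.Perm (Fin n))⁻¹ i = i' := by rw [← hσ]; simp
      simp [Equiv.Perm.mul_apply, this, hπ]
    · intro π _; group
    · intro π _; group
  have hfib : ∀ (i u : Fin n), g i u = g i₀ i₀ := fun i u =>
    (hfib1 i u i₀).trans (hfib2 i i₀ i₀)
  set g₀ := g i₀ i₀ with hg₀
  have hg₀pos : 0 < g₀ := by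
    apply Finset.card_pos.mpr
    exact ⟨⟨1, G.one_mem⟩, by simp⟩
  have hcardG : Fintype.card ↥G = n * g₀ := by
    rw [← Finset.card_univ]
    rw [Finset.card_eq_sum_card_fiberwise
      (f := fun π : ↥G => (π : Equiv.Perm (Fin n)) i₀) (t := Finset.univ)
      (fun π _ => mem_univ _)]
    rw [Finset.sum_congr rfl (fun u _ => hfib i₀ u)]
    simp [Finset.card_univ, mul_comm]
  -- counting the incidences
  have hbig : Fintype.card ↥G ≤
      ∑ π : ↥G, (S.filter fun i => (π : Equiv.Perm (Fin n)) i ∈ U).card := by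
    rw [← Finset.card_univ]
    calc (Finset.univ : Finset ↥G).card = ∑ _π : ↥G, 1 := by simp
    _ ≤ _ := by
        apply Finset.sum_le_sum
        intro π _
        obtain ⟨i, hi, hiU⟩ := hcon π.1 π.2
        exact Finset.card_pos.mpr ⟨i, by simp [hi, hiU]⟩
  have hsmall : ∑ π : ↥G, (S.filter fun i => (π : Equiv.Perm (Fin n)) i ∈ U).card
      = S.card * U.card * g₀ := by
    have h1 : ∀ π : ↥G, (S.filter fun i => (π : Equiv.Perm (Fin n)) i ∈ U).card
        = ∑ i ∈ S, if (π : Equiv.Perm (Fin n)) i ∈ U then 1 else 0 := by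
      intro π; rw [Finset.card_filter]
    rw [Finset.sum_congr rfl (fun π _ => h1 π)]
    rw [Finset.sum_comm]
    have h2 : ∀ i ∈ S, (∑ π : ↥G, if (π : Equiv.Perm (Fin n)) i ∈ U then 1 else 0)
        = U.card * g₀ := by
      intro i _
      rw [← Finset.card_filter]
      rw [Finset.card_eq_sum_card_fiberwise
        (f := fun π : ↥G => (π : Equiv.Perm (Fin n)) i) (t := U)
        (fun π hπ => by simpa using hπ)]
      have h3 : ∀ u ∈ U,
          ((Finset.univ.filter fun π : ↥G => (π : Equiv.Perm (Fin n)) i ∈ U).filter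
            fun π : ↥G => (π : Equiv.Perm (Fin n)) i = u).card = g₀ := by
        intro u hu
        rw [Finset.filter_filter]
        have : (Finset.univ.filter fun π : ↥G =>
            (π : Equiv.Perm (Fin n)) i ∈ U ∧ (π : Equiv.Perm (Fin n)) i = u)
            = Finset.univ.filter fun π : ↥G => (π : Equiv.Perm (Fin n)) i = u := by
          apply Finset.filter_congr
          intro π _
          constructor
          · exact fun h => h.2
          · exact fun h => ⟨h ▸ hu, h⟩
        rw [this, ← hfib i u]
      rw [Finset.sum_congr rfl h3]
      simp [mul_comm]
    rw [Finset.sum_congr rfl h2]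
    simp [Finset.sum_const, mul_assoc]
  rw [hsmall, hcardG] at hbig
  have : S.card * U.card * g₀ < n * g₀ := by
    have h := Nat.mul_lt_mul_of_lt_of_le (b := g₀)
      (show S.card * U.card < n by rw [mul_comm]; exact hU) (le_refl g₀) hg₀pos
    exact h
  omega

lemma greedy {n : ℕ} (G : Subgroup (Equiv.Perm (Fin n))) (hG : IsTransitive G)
    (S : Finset (Fin n)) (p : Fin n → Bool) (hS : S.Nonempty) (b : Bool)
    (hb : (S.filter fun i => p i = b).Nonempty) :
    ∀ r : ℕ, 2 * S.card * S.card * r ≤ n →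
      ∃ (z : Fin n → Bool) (U V : Finset (Fin n)), mintermFn G S p z = false ∧ V.card = r ∧ V ⊆ U ∧
        U.card ≤ 2 * S.card * r ∧ (∀ j, j ∉ U → z j = !b) ∧
        ∀ v ∈ V, ∃ π, π ∈ G ∧ (∀ i ∈ S, π i ∈ U) ∧ ∀ i ∈ S, flipBit z v (π i) = p i := by
  classical
  intro r
  induction r with
  | zero =>
    intro _
    refine ⟨fun _ => !b, ∅, ∅, ?_, by simp, by simp, by simp, fun _ _ => rfl, by simp⟩
    cases h : mintermFn G S p (fun _ => !b) with
    | false => rfl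
    | true =>
      exfalso
      have hle := count_le_of_true G S p b _ h
      have h0 : (Finset.univ.filter fun _ : Fin n => (!b) = b) = (∅ : Finset (Fin n)) := by
        apply Finset.filter_false_of_mem
        intro _ _
        cases b <;> simp
      rw [h0] at hle
      simp only [Finset.card_empty, Nat.le_zero, Finset.card_eq_zero] at hle
      rw [hle] at hb
      exact Finset.not_nonempty_empty hb
  | succ r ih =>
    intro hr
    have hk : 0 < S.card := Finset.card_pos.mpr hS
    have hr' : 2 * S.card * S.card * r ≤ n := by
      refine le_trans ?_ hr
      exact Nat.mul_le_mul_left _ (Nat.le_succ r)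
    obtain ⟨z, U, V, hz, hV, hVU, hU, hbg, hsens⟩ := ih hr'
    have hUS : U.card * S.card < n := by
      have h1 : U.card * S.card ≤ 2 * S.card * r * S.card :=
        Nat.mul_le_mul_right _ hU
      have h2 : 2 * S.card * r * S.card < 2 * S.card * S.card * (r + 1) := by
        have : 2 * S.card * r * S.card = 2 * S.card * S.card * r := by ring
        rw [this]
        have h3 : 0 < 2 * S.card * S.card := by positivity
        nlinarith
      omega
    obtain ⟨π₀, hπ₀G, hπ₀⟩ := exists_free_translate G hG S hS U hUS
    set T : Finset (Fin n) := S.image π₀ with hT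
    have hUT : ∀ j ∈ U, j ∉ T := by
      intro j hj hjT
      obtain ⟨i, hi, rfl⟩ := Finset.mem_image.1 hjT
      exact hπ₀ i hi hj
    set w : Fin n → Bool := fun j => if h : j ∈ T then p (π₀.symm j) else z j with hwdef
    have hzw_off : ∀ j, j ∉ T → w j = z j := by
      intro j hj; simp only [w, dif_neg hj]
    have hw : mintermFn G S p w = true := by
      rw [mintermFn_eq_true_iff]
      refine ⟨π₀, hπ₀G, fun i hi => ?_⟩
      have hmem : π₀ i ∈ T := Finset.mem_image_of_mem _ hi
      simp only [w, dif_pos hmem, Equiv.symm_apply_apply]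
    obtain ⟨z', v, hz', hflip, hagr, hv⟩ :=
      path_lemma (mintermFn G S p) _ z w le_rfl hz hw
    have hvT : v ∈ T := by
      by_contra h
      exact hv ((hzw_off v h).symm ▸ rfl)
    have hz'off : ∀ j, j ∉ T → z' j = z j := fun j hj => hagr j (hzw_off j hj).symm
    rw [mintermFn_eq_true_iff] at hflip
    obtain ⟨π₁, hπ₁G, hπ₁⟩ := hflip
    have hvU : v ∉ U := fun h => hUT v h hvT
    have hvV : v ∉ V := fun h => hvU (hVU h)
    refine ⟨z', (U ∪ T) ∪ S.image π₁, insert v V, hz', ?_, ?_, ?_, ?_, ?_⟩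
    · rw [Finset.card_insert_of_notMem hvV, hV]
    · apply Finset.insert_subset
      · exact Finset.mem_union_left _ (Finset.mem_union_right _ hvT)
      · exact hVU.trans ((Finset.subset_union_left).trans Finset.subset_union_left)
    · have h1 : ((U ∪ T) ∪ S.image π₁).card ≤ U.card + T.card + (S.image π₁).card := by
        have := Finset.card_union_le (U ∪ T) (S.image π₁)
        have := Finset.card_union_le U T
        omega
      have h2 : T.card = S.card := Finset.card_image_of_injective _ π₀.injective
      have h3 : (S.image π₁).card ≤ S.card := Finset.card_image_le
      have h4 : 2 * S.card * (r + 1) = 2 * S.card * r + S.card + S.card := by ring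
      omega
    · intro j hj
      simp only [Finset.mem_union, not_or] at hj
      rw [hz'off j hj.1.2]
      exact hbg j hj.1.1
    · intro v' hv'
      rcases Finset.mem_insert.1 hv' with rfl | hv'V
      · refine ⟨π₁, hπ₁G, fun i hi => ?_, hπ₁⟩
        exact Finset.mem_union_right _ (Finset.mem_image_of_mem _ hi)
      · obtain ⟨π, hπG, hπU, hπm⟩ := hsens v' hv'V
        refine ⟨π, hπG, fun i hi => Finset.mem_union_left _
          (Finset.mem_union_left _ (hπU i hi)), fun i hi => ?_⟩
        have hiU : π i ∈ U := hπU i hi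
        have hiT : π i ∉ T := hUT _ hiU
        have heq : z' (π i) = z (π i) := hz'off _ hiT
        have := hπm i hi
        simp only [flipBit] at this ⊢
        rw [heq]
        exact this

lemma minterm_const_false {n : ℕ} (G : Subgroup (Equiv.Perm (Fin n))) (S : Finset (Fin n))
    (p : Fin n → Bool) (b : Bool) (hb : (S.filter fun i => p i = b).Nonempty) :
    mintermFn G S p (fun _ => !b) = false := by
  cases h : mintermFn G S p (fun _ => !b) with
  | false => rfl
  | true =>
    exfalso
    have hle := count_le_of_true G S p b _ h
    have h0 : (Finset.univ.filter fun _ : Fin n => (!b) = b) = (∅ : Finset (Fin n)) := by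
      apply Finset.filter_false_of_mem
      intro _ _
      cases b <;> simp
    rw [h0] at hle
    simp only [Finset.card_empty, Nat.le_zero, Finset.card_eq_zero] at hle
    rw [hle] at hb
    exact Finset.not_nonempty_empty hb

lemma one_le_sens0 {n : ℕ} (G : Subgroup (Equiv.Perm (Fin n))) (S : Finset (Fin n))
    (p : Fin n → Bool) (hS : S.Nonempty) : 1 ≤ sens0 (mintermFn G S p) := by
  classical
  obtain ⟨i₀, hi₀⟩ := hS
  have hb : (S.filter fun i => p i = p i₀).Nonempty := ⟨i₀, by simp [hi₀]⟩
  have hz0 : mintermFn G S p (fun _ => !(p i₀)) = false := minterm_const_false G S p _ hb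
  set w : Fin n → Bool := fun j => if j ∈ S then p j else !(p i₀) with hw
  have hwt : mintermFn G S p w = true := by
    rw [mintermFn_eq_true_iff]
    exact ⟨1, G.one_mem, fun i hi => by simp [w, hi]⟩
  obtain ⟨z', v, hz', hflip, _, _⟩ :=
    path_lemma (mintermFn G S p) _ (fun _ => !(p i₀)) w le_rfl hz0 hwt
  have := le_sens0 (mintermFn G S p) z' hz' {v} (fun u hu => by
    rw [Finset.mem_singleton] at hu; rw [hu]; exact hflip)
  simpa using this

lemma final_arith (n k s0 s1 : ℕ) (hk : 1 ≤ k) (h1 : 1 ≤ s0) (h2 : 1 ≤ s1)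
    (h3 : k ≤ 2 * s1) (h4 : n / (2 * k * k) ≤ s0) :
    ((1/8 : ℝ) * ((n : ℝ) / (k : ℝ)) ≤ (s0 : ℝ) * (s1 : ℝ) ∧
      (k : ℝ) / 2 ≤ (s0 : ℝ) * (s1 : ℝ)) ∧
    (1/4 : ℝ) * Real.sqrt (n : ℝ) ≤ (s0 : ℝ) * (s1 : ℝ) := by
  have hKR : (1 : ℝ) ≤ (k : ℝ) := by exact_mod_cast hk
  have hA : (1 : ℝ) ≤ (s0 : ℝ) := by exact_mod_cast h1
  have hB1 : (1 : ℝ) ≤ (s1 : ℝ) := by exact_mod_cast h2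
  have hB : (k : ℝ) ≤ 2 * (s1 : ℝ) := by exact_mod_cast h3
  have hA0 : (0:ℝ) ≤ (s0:ℝ) := by linarith
  have hB0 : (0:ℝ) ≤ (s1:ℝ) := by linarith
  have hKpos : (0:ℝ) < (k : ℝ) := by linarith
  have key : (n : ℝ) ≤ 8 * (k : ℝ) * ((s0:ℝ) * (s1:ℝ)) := by
    by_cases hcase : n ≤ 4 * k * k
    · have hn4 : (n : ℝ) ≤ 4 * (k:ℝ) * (k:ℝ) := by exact_mod_cast hcase
      have t2 : 4 * (k:ℝ) * (k:ℝ) ≤ 8 * (k:ℝ) * (s1:ℝ) := by nlinarith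
      have t3 : 8 * (k:ℝ) * (s1:ℝ) ≤ 8 * (k:ℝ) * ((s0:ℝ) * (s1:ℝ)) := by nlinarith
      linarith
    · push_neg at hcase
      have hq0 : 0 < 2 * k * k := by positivity
      have hd1 : 1 ≤ n / (2 * k * k) := by
        rw [Nat.one_le_div_iff hq0]
        calc 2 * k * k ≤ 4 * k * k := Nat.mul_le_mul_right _ (by omega)
        _ ≤ n := le_of_lt hcase
      have hnat : n < 2 * (2 * k * k * (n / (2 * k * k))) := by
        have e1 := Nat.div_add_mod n (2 * k * k)
        have e2 : n % (2 * k * k) < 2 * k * k := Nat.mod_lt _ hq0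
        calc n = 2 * k * k * (n / (2 * k * k)) + n % (2 * k * k) := e1.symm
        _ < 2 * k * k * (n / (2 * k * k)) + 2 * k * k := Nat.add_lt_add_left e2 _
        _ ≤ 2 * k * k * (n / (2 * k * k)) + 2 * k * k * (n / (2 * k * k)) :=
            Nat.add_le_add_left (Nat.le_mul_of_pos_right _ (by omega)) _
        _ = 2 * (2 * k * k * (n / (2 * k * k))) := by ring
      have hnat2 : n ≤ 2 * (2 * k * k * s0) := by
        have h6 : 2 * k * k * (n / (2 * k * k)) ≤ 2 * k * k * s0 :=
          Nat.mul_le_mul_left _ h4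
        omega
      have hR : (n : ℝ) ≤ 4 * (k : ℝ) * (k : ℝ) * (s0:ℝ) := by
        have := (Nat.cast_le (α := ℝ)).mpr hnat2
        push_cast at this
        nlinarith
      nlinarith
  have hG2 : (k : ℝ) / 2 ≤ (s0:ℝ) * (s1:ℝ) := by nlinarith
  refine ⟨⟨?_, hG2⟩, ?_⟩
  · have h8 : (n:ℝ) / (k:ℝ) ≤ 8 * ((s0:ℝ) * (s1:ℝ)) := by
      rw [div_le_iff₀ hKpos]
      nlinarith
    linarith
  · have h16 : (n : ℝ) ≤ (4 * ((s0:ℝ) * (s1:ℝ))) ^ 2 := by nlinarith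
    have hsq : Real.sqrt (n : ℝ) ≤ 4 * ((s0:ℝ) * (s1:ℝ)) := by
      calc Real.sqrt (n : ℝ) ≤ Real.sqrt ((4 * ((s0:ℝ) * (s1:ℝ))) ^ 2) :=
            Real.sqrt_le_sqrt h16
      _ = 4 * ((s0:ℝ) * (s1:ℝ)) := Real.sqrt_sq (by positivity)
    linarith

end MintermAux

/-- For minterm-transitive functions the product of 0- and 1-sensitivity is
`Ω(√n)`: there are absolute constants `c, c' > 0` such that for every
minterm-transitive `f = p^G` with pattern support size `k ≥ 1`,
`s⁰(f)·s¹(f) ≥ max(c·n/k, k/2) ≥ c'·√n`. -/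
theorem sens0_mul_sens1_lower_bound :
    ∃ c : ℝ, 0 < c ∧ ∃ c' : ℝ, 0 < c' ∧
      ∀ (n k : ℕ) (G : Subgroup (Equiv.Perm (Fin n))), IsTransitive G →
        ∀ (S : Finset (Fin n)) (p : Fin n → Bool), S.card = k → 1 ≤ k →
          (c * ((n : ℝ) / (k : ℝ)) ≤
              (sens0 (mintermFn G S p) : ℝ) * (sens1 (mintermFn G S p) : ℝ) ∧
            (k : ℝ) / 2 ≤
              (sens0 (mintermFn G S p) : ℝ) * (sens1 (mintermFn G S p) : ℝ)) ∧
          c' * Real.sqrt (n : ℝ) ≤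
            (sens0 (mintermFn G S p) : ℝ) * (sens1 (mintermFn G S p) : ℝ) := by
  classical
  refine ⟨1/8, by norm_num, 1/4, by norm_num, ?_⟩
  intro n k G hG S p hSk hk
  subst hSk
  have hS1 : S.Nonempty := Finset.card_pos.mp (by omega)
  obtain ⟨i₀, hi₀⟩ := hS1
  have hbne : (S.filter fun i => p i = p i₀).Nonempty := ⟨i₀, by simp [hi₀]⟩
  have hs1 : S.card ≤ 2 * sens1 (mintermFn G S p) := sens1_bound G S p
  have hs0one : 1 ≤ sens0 (mintermFn G S p) := one_le_sens0 G S p ⟨i₀, hi₀⟩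
  have hgr : n / (2 * S.card * S.card) ≤ sens0 (mintermFn G S p) := by
    obtain ⟨z, U, V, hz, hV, _, _, _, hsens⟩ := greedy G hG S p ⟨i₀, hi₀⟩ (p i₀) hbne
      (n / (2 * S.card * S.card))
      (by rw [mul_comm]; exact Nat.div_mul_le_self n _)
    rw [← hV]
    apply le_sens0 (mintermFn G S p) z hz V
    intro v hv
    obtain ⟨π, hπG, _, hπm⟩ := hsens v hv
    rw [mintermFn_eq_true_iff]
    exact ⟨π, hπG, hπm⟩
  have hs1one : 1 ≤ sens1 (mintermFn G S p) := by omega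
  exact final_arith n S.card _ _ hk hs0one hs1one hs1 hgr
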